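/- arXiv:2208.05767 — 4 statements merged into one kernel-verified Lean document; each statement's English description precedes it below -/
import Mathlib

section
/- For any p, q ∈ [1/2, 1) with p > q, the KL divergence between Bernoulli distributions satisfies KL(Ber(p) ‖ Ber(q)) ≤ KL(Ber(q) ‖ Ber(p)) ≤ (p−q)²/(p(1−p)). -/
set_option maxHeartbeats 1000000

/-- KL divergence between Bernoulli distributions. -/
noncomputable def klBer (p q : ℝ) : ℝ :=
  p * Real.log (p / q) + (1 - p) * Real.log ((1 - p) / (1 - q))

lemma lemB_aux (z : ℝ) (h0 : 0 ≤ z) (h1 : z < 1) :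
    2*z + 2*z^3/3 ≤ Real.log (1+z) - Real.log (1-z) := by
  set f : ℝ → ℝ := fun y => Real.log (1+y) - Real.log (1-y) - (2*y + 2*y^3/3) with hf
  have hd : ∀ t ∈ Set.Icc (0:ℝ) z,
      HasDerivAt f (1/(1+t) + 1/(1-t) - (2 + 2*t^2)) t := by
    intro t ht
    have h1t : (0:ℝ) < 1 + t := by linarith [ht.1]
    have h2t : (0:ℝ) < 1 - t := by linarith [ht.2]
    have hA : HasDerivAt (fun y : ℝ => Real.log (1+y)) (1/(1+t)) t := by
      simpa using ((hasDerivAt_id t).const_add 1).log h1t.ne'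
    have hB : HasDerivAt (fun y : ℝ => Real.log (1-y)) (-1/(1-t)) t := by
      simpa using ((hasDerivAt_id t).const_sub 1).log h2t.ne'
    have hC : HasDerivAt (fun y : ℝ => 2*y + 2*y^3/3) (2 + 2*t^2) t := by
      have h3 : HasDerivAt (fun y : ℝ => 2*y^3/3) (2*(3*t^2)/3) t :=
        ((hasDerivAt_pow 3 t).const_mul 2).div_const 3
      have h4 : HasDerivAt (fun y : ℝ => 2*y) 2 t := by
        simpa using (hasDerivAt_id t).const_mul 2
      exact (h4.add h3).congr_deriv (by ring)
    exact ((hA.sub hB).sub hC).congr_deriv (by ring)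
  have hmono : MonotoneOn f (Set.Icc 0 z) := by
    apply monotoneOn_of_deriv_nonneg (convex_Icc 0 z)
    · exact fun t ht => (hd t ht).continuousAt.continuousWithinAt
    · intro t ht
      rw [interior_Icc] at ht
      exact (hd t (Set.Ioo_subset_Icc_self ht)).differentiableAt.differentiableWithinAt
    · intro t ht
      rw [interior_Icc] at ht
      rw [(hd t (Set.Ioo_subset_Icc_self ht)).deriv]
      have h1t : (0:ℝ) < 1 + t := by linarith [ht.1]
      have h2t : (0:ℝ) < 1 - t := by linarith [ht.2.trans h1]
      rw [div_add_div _ _ h1t.ne' h2t.ne', sub_nonneg, le_div_iff₀ (by positivity)]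
      nlinarith [pow_nonneg (le_of_lt ht.1) 4, sq_nonneg t]
  have h00 : f 0 = 0 := by simp [hf]
  have := hmono (Set.left_mem_Icc.2 h0) (Set.right_mem_Icc.2 h0) h0
  rw [h00] at this
  simp only [hf] at this
  linarith

lemma lemA_aux (z : ℝ) (h0 : 0 ≤ z) (h1 : z < 1) :
    (1 - z^2) * (Real.log (1+z) - Real.log (1-z)) ≤ 2*z - 4*z^3/3 := by
  set g : ℝ → ℝ := fun y => 2*y - 4*y^3/3 - (1-y^2) * (Real.log (1+y) - Real.log (1-y)) with hg
  have hd : ∀ t ∈ Set.Icc (0:ℝ) z,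
      HasDerivAt g (2 - 4*t^2 - ((-(2*t)) * (Real.log (1+t) - Real.log (1-t))
        + (1-t^2) * (1/(1+t) + 1/(1-t)))) t := by
    intro t ht
    have h1t : (0:ℝ) < 1 + t := by linarith [ht.1]
    have h2t : (0:ℝ) < 1 - t := by linarith [lt_of_le_of_lt ht.2 h1]
    have hA : HasDerivAt (fun y : ℝ => Real.log (1+y)) (1/(1+t)) t := by
      simpa using ((hasDerivAt_id t).const_add 1).log h1t.ne'
    have hB : HasDerivAt (fun y : ℝ => Real.log (1-y)) (-1/(1-t)) t := by
      simpa using ((hasDerivAt_id t).const_sub 1).log h2t.ne'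
    have hQ : HasDerivAt (fun y : ℝ => 1 - y^2) (-(2*t)) t := by
      simpa using (hasDerivAt_pow 2 t).const_sub 1
    have hP : HasDerivAt (fun y : ℝ => 2*y - 4*y^3/3) (2 - 4*t^2) t := by
      have h3 : HasDerivAt (fun y : ℝ => 4*y^3/3) (4*(3*t^2)/3) t :=
        ((hasDerivAt_pow 3 t).const_mul 4).div_const 3
      have h4 : HasDerivAt (fun y : ℝ => 2*y) 2 t := by
        simpa using (hasDerivAt_id t).const_mul 2
      exact (h4.sub h3).congr_deriv (by ring)
    have hprod := hQ.mul (hA.sub hB)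
    exact (hP.sub hprod).congr_deriv (by simp only [Pi.sub_apply]; ring)
  have hmono : MonotoneOn g (Set.Icc 0 z) := by
    apply monotoneOn_of_deriv_nonneg (convex_Icc 0 z)
    · exact fun t ht => (hd t ht).continuousAt.continuousWithinAt
    · intro t ht
      rw [interior_Icc] at ht
      exact (hd t (Set.Ioo_subset_Icc_self ht)).differentiableAt.differentiableWithinAt
    · intro t ht
      rw [interior_Icc] at ht
      rw [(hd t (Set.Ioo_subset_Icc_self ht)).deriv]
      have h1t : (0:ℝ) < 1 + t := by linarith [ht.1]
      have h2t : (0:ℝ) < 1 - t := by linarith [ht.2.trans h1]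
      have hsum : (1-t^2) * (1/(1+t) + 1/(1-t)) = 2 := by
        field_simp
        ring
      rw [hsum]
      have hL := lemB_aux t (le_of_lt ht.1) (ht.2.trans h1)
      nlinarith [ht.1, pow_nonneg (le_of_lt ht.1) 3]
  have h00 : g 0 = 0 := by simp [hg]
  have := hmono (Set.left_mem_Icc.2 h0) (Set.right_mem_Icc.2 h0) h0
  rw [h00] at this
  simp only [hg] at this
  linarith

lemma log_sub_eq (a b : ℝ) (ha : 0 < a) (hab : a < b) :
    Real.log (1 + (b-a)/(a+b)) - Real.log (1 - (b-a)/(a+b))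
      = Real.log b - Real.log a := by
  have hb : 0 < b := ha.trans hab
  have hab' : (0:ℝ) < a + b := by linarith
  have e1 : 1 + (b-a)/(a+b) = (2*b)/(a+b) := by field_simp; ring
  have e2 : 1 - (b-a)/(a+b) = (2*a)/(a+b) := by field_simp; ring
  rw [e1, e2, Real.log_div (by positivity) hab'.ne', Real.log_div (by positivity) hab'.ne',
    Real.log_mul (by norm_num) hb.ne', Real.log_mul (by norm_num) ha.ne']
  ring

lemma log_sub_upper (a b : ℝ) (ha : 0 < a) (hab : a < b) :
    4*a*b*(a+b)*(Real.log b - Real.log a) ≤ 2*(b-a)*(a+b)^2 - (4/3)*(b-a)^3 := by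
  have hb : 0 < b := ha.trans hab
  have hab' : (0:ℝ) < a + b := by linarith
  have hz0 : 0 ≤ (b-a)/(a+b) := div_nonneg (by linarith) hab'.le
  have hz1 : (b-a)/(a+b) < 1 := by rw [div_lt_one hab']; linarith
  have key := lemA_aux _ hz0 hz1
  rw [log_sub_eq a b ha hab] at key
  have key2 := mul_le_mul_of_nonneg_left key (pow_nonneg hab'.le 3)
  calc 4*a*b*(a+b)*(Real.log b - Real.log a)
      = (a+b)^3 * ((1 - ((b-a)/(a+b))^2) * (Real.log b - Real.log a)) := by
        field_simp; ring
    _ ≤ (a+b)^3 * (2*((b-a)/(a+b)) - 4*((b-a)/(a+b))^3/3) := key2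
    _ = 2*(b-a)*(a+b)^2 - (4/3)*(b-a)^3 := by field_simp

lemma log_sub_lower (a b : ℝ) (ha : 0 < a) (hab : a < b) :
    2*(b-a)*(a+b)^2 + (2/3)*(b-a)^3 ≤ (a+b)^3*(Real.log b - Real.log a) := by
  have hb : 0 < b := ha.trans hab
  have hab' : (0:ℝ) < a + b := by linarith
  have hz0 : 0 ≤ (b-a)/(a+b) := div_nonneg (by linarith) hab'.le
  have hz1 : (b-a)/(a+b) < 1 := by rw [div_lt_one hab']; linarith
  have key := lemB_aux _ hz0 hz1
  rw [log_sub_eq a b ha hab] at key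
  have key2 := mul_le_mul_of_nonneg_left key (pow_nonneg hab'.le 3)
  calc 2*(b-a)*(a+b)^2 + (2/3)*(b-a)^3
      = (a+b)^3 * (2*((b-a)/(a+b)) + 2*((b-a)/(a+b))^3/3) := by field_simp
    _ ≤ (a+b)^3 * (Real.log b - Real.log a) := key2

theorem kl_bernoulli_bounds (p q : ℝ) (hq : 1/2 ≤ q) (hqp : q < p) (hp : p < 1) :
    klBer p q ≤ klBer q p ∧ klBer q p ≤ (p - q)^2 / (p * (1 - p)) := by
  have hq0 : (0:ℝ) < q := by linarith
  have hp0 : (0:ℝ) < p := by linarith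
  have h1p : (0:ℝ) < 1 - p := by linarith
  have h1q : (0:ℝ) < 1 - q := by linarith
  constructor
  · -- first inequality
    have hU := log_sub_upper q p hq0 hqp
    have hL := log_sub_lower (1-p) (1-q) h1p (by linarith)
    set L1 := Real.log p - Real.log q with hL1
    set L2 := Real.log (1-q) - Real.log (1-p) with hL2
    have e1 := mul_le_mul_of_nonneg_left hU (sq_nonneg (2-p-q))
    have e2 := mul_le_mul_of_nonneg_left hL (by positivity : (0:ℝ) ≤ 4*p*q)
    have hsq : (2-p-q)^2 ≤ 4*p*q := by nlinarith
    have hcube : (0:ℝ) ≤ (p-q)^3 * (4*p*q - (2-p-q)^2) :=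
      mul_nonneg (pow_nonneg (by linarith) 3) (sub_nonneg.2 hsq)
    have hbridge : (2-p-q)^2 * (2*(p-q)*(q+p)^2 - (4/3)*(p-q)^3)
        ≤ (4*p*q) * (2*((1-q)-(1-p))*((1-p)+(1-q))^2 + (2/3)*((1-q)-(1-p))^3) := by
      nlinarith [hcube]
    have hKpos : (0:ℝ) < 4*p*q*(2-p-q)^2 :=
      mul_pos (by nlinarith : (0:ℝ) < 4*p*q) (pow_pos (by linarith) 2)
    have big : (4*p*q*(2-p-q)^2) * ((p+q)*L1) ≤ (4*p*q*(2-p-q)^2) * ((2-p-q)*L2) := by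
      calc (4*p*q*(2-p-q)^2) * ((p+q)*L1)
          = (2-p-q)^2 * (4*q*p*(q+p)*L1) := by ring
        _ ≤ (2-p-q)^2 * (2*(p-q)*(q+p)^2 - (4/3)*(p-q)^3) := e1
        _ ≤ (4*p*q) * (2*((1-q)-(1-p))*((1-p)+(1-q))^2 + (2/3)*((1-q)-(1-p))^3) := hbridge
        _ ≤ (4*p*q) * (((1-p)+(1-q))^3 * L2) := e2
        _ = (4*p*q*(2-p-q)^2) * ((2-p-q)*L2) := by ring
    have key : (p+q)*L1 ≤ (2-p-q)*L2 := le_of_mul_le_mul_left big hKpos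
    rw [klBer, klBer, Real.log_div hp0.ne' hq0.ne', Real.log_div h1p.ne' h1q.ne',
      Real.log_div hq0.ne' hp0.ne', Real.log_div h1q.ne' h1p.ne']
    simp only [hL1, hL2] at key
    linarith [key]
  · -- second inequality
    have h1 : Real.log (q/p) ≤ q/p - 1 :=
      Real.log_le_sub_one_of_pos (by positivity)
    have h2 : Real.log ((1-q)/(1-p)) ≤ (1-q)/(1-p) - 1 :=
      Real.log_le_sub_one_of_pos (by positivity)
    have hEq : q*(q/p - 1) + (1-q)*((1-q)/(1-p) - 1) = (p-q)^2/(p*(1-p)) := by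
      field_simp
      ring
    rw [klBer]
    linarith [mul_le_mul_of_nonneg_left h1 hq0.le,
      mul_le_mul_of_nonneg_left h2 h1q.le, hEq]
end

section
/- Let X be a random variable on a finite probability space with X ∈ [0, M], σ > 0, and f(λ) := −λ·log E[exp(−X/λ)] − λσ for λ > 0 (extended by f(0) := ess inf X). Then any maximizer λ* of f over [0, ∞) satisfies λ* ≤ M/σ. -/
open Classical in
/-- Any maximizer over `[0, ∞)` of the KL dual objective
`f(λ) = -λ log E[exp(-X/λ)] - λσ` (with `f(0) := ess inf X =: e`) satisfies `λ* ≤ M/σ`,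
for a random variable `X ∈ [0, M]` on a finite probability space with pmf `P`. -/
theorem kl_dual_maximizer_le {Ω : Type*} [Fintype Ω]
    (P : Ω → ℝ) (hP : ∀ ω, 0 ≤ P ω) (hPsum : ∑ ω, P ω = 1)
    (X : Ω → ℝ) (M : ℝ) (hX : ∀ ω, X ω ∈ Set.Icc 0 M)
    (σ : ℝ) (hσ : 0 < σ)
    (e : ℝ) (he1 : ∃ ω, 0 < P ω ∧ X ω = e) (he2 : ∀ ω, 0 < P ω → e ≤ X ω)
    (lamStar : ℝ) (hlam : 0 ≤ lamStar)
    (hmax : ∀ lam : ℝ, 0 ≤ lam →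
      (if lam = 0 then e
        else -lam * Real.log (∑ ω, P ω * Real.exp (-X ω / lam)) - lam * σ) ≤
      (if lamStar = 0 then e
        else -lamStar * Real.log (∑ ω, P ω * Real.exp (-X ω / lamStar)) - lamStar * σ)) :
    lamStar ≤ M / σ := by
  obtain ⟨ω0, hω0P, hω0X⟩ := he1
  have hM0 : 0 ≤ M := le_trans (hX ω0).1 (hX ω0).2
  rcases eq_or_lt_of_le hlam with h0 | hpos
  · rw [← h0]; positivity
  · have hne : lamStar ≠ 0 := ne_of_gt hpos
    have hmax0 := hmax 0 le_rfl
    simp only [if_pos rfl, if_true, if_neg hne] at hmax0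
    have he0 : 0 ≤ e := hω0X ▸ (hX ω0).1
    set S := ∑ ω, P ω * Real.exp (-X ω / lamStar) with hS
    have hSpos : 0 < S := by
      apply Finset.sum_pos' (fun ω _ => mul_nonneg (hP ω) (Real.exp_pos _).le)
      exact ⟨ω0, Finset.mem_univ _, mul_pos hω0P (Real.exp_pos _)⟩
    have hSge : Real.exp (-M / lamStar) ≤ S := by
      calc Real.exp (-M / lamStar) = ∑ ω, P ω * Real.exp (-M / lamStar) := by
            rw [← Finset.sum_mul, hPsum, one_mul]
        _ ≤ S := Finset.sum_le_sum fun ω _ => by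
            apply mul_le_mul_of_nonneg_left _ (hP ω)
            exact Real.exp_le_exp.2 (div_le_div_of_nonneg_right (neg_le_neg (hX ω).2) hpos.le)
    have hlog : -M / lamStar ≤ Real.log S := by
      have := Real.log_le_log (Real.exp_pos _) hSge
      rwa [Real.log_exp] at this
    have hkey : -lamStar * Real.log S ≤ M := by
      have h1 := mul_le_mul_of_nonneg_left hlog hpos.le
      have h2 : lamStar * (-M / lamStar) = -M := by field_simp
      nlinarith
    rw [le_div_iff₀ hσ]; linarith
end

section
/- Let X be a random variable on a finite probability space with X ∈ [0,M] and σ > 0. If log P(X = ess inf X) + σ ≥ 0, then sup_{λ > 0} ( −λ·log E[exp(−X/λ)] − λσ ) is attained in the limit λ → 0 and equals ess inf X. -/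
open Classical in
/-- If `log P(X = ess inf X) + σ ≥ 0`, then the supremum over `λ > 0` of the KL dual
objective `-λ log E[exp(-X/λ)] - λσ` is attained in the limit `λ → 0` and equals
the essential infimum `e` of `X`. -/
theorem kl_dual_sup_eq_essInf {Ω : Type*} [Fintype Ω]
    (P : Ω → ℝ) (hP : ∀ ω, 0 ≤ P ω) (hPsum : ∑ ω, P ω = 1)
    (X : Ω → ℝ) (M : ℝ) (hX : ∀ ω, X ω ∈ Set.Icc 0 M)
    (σ : ℝ) (hσ : 0 < σ)
    (e : ℝ) (he1 : ∃ ω, 0 < P ω ∧ X ω = e) (he2 : ∀ ω, 0 < P ω → e ≤ X ω)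
    (hcond : 0 ≤ Real.log (∑ ω, if X ω = e then P ω else 0) + σ) :
    sSup ((fun lam : ℝ =>
        -lam * Real.log (∑ ω, P ω * Real.exp (-X ω / lam)) - lam * σ) '' Set.Ioi 0) = e := by
  set p : ℝ := ∑ ω, if X ω = e then P ω else 0 with hpdef
  obtain ⟨ω₀, hω₀P, hω₀X⟩ := he1
  have hp : 0 < p := by
    have : (if X ω₀ = e then P ω₀ else 0) ≤ p := by
      refine Finset.single_le_sum (f := fun ω => if X ω = e then P ω else 0)
        (fun i _ => ?_) (Finset.mem_univ ω₀)
      show 0 ≤ (if X i = e then P i else 0)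
      split
      · exact hP i
      · exact le_refl 0
    rw [if_pos hω₀X] at this
    linarith
  -- Key bounds for each lam > 0
  have key : ∀ lam : ℝ, 0 < lam →
      e - lam * σ ≤ -lam * Real.log (∑ ω, P ω * Real.exp (-X ω / lam)) - lam * σ ∧
      -lam * Real.log (∑ ω, P ω * Real.exp (-X ω / lam)) - lam * σ ≤ e := by
    intro lam hlam
    set E : ℝ := ∑ ω, P ω * Real.exp (-X ω / lam) with hEdef
    have hE1 : p * Real.exp (-e / lam) ≤ E := by
      rw [hpdef, Finset.sum_mul]
      apply Finset.sum_le_sum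
      intro i _
      split
      · rename_i h; rw [h]
      · rw [zero_mul]
        exact mul_nonneg (hP i) (Real.exp_nonneg _)
    have hE2 : E ≤ Real.exp (-e / lam) := by
      calc E ≤ ∑ ω, P ω * Real.exp (-e / lam) := by
              apply Finset.sum_le_sum
              intro i _
              rcases eq_or_lt_of_le (hP i) with h | h
              · rw [← h]; simp
              · apply mul_le_mul_of_nonneg_left _ (hP i)
                apply Real.exp_le_exp.mpr
                have := he2 i h
                gcongr <;> linarith
        _ = Real.exp (-e / lam) := by rw [← Finset.sum_mul, hPsum, one_mul]
    have hEpos : 0 < E := lt_of_lt_of_le (by positivity) hE1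
    have hlog1 : Real.log p + (-e / lam) ≤ Real.log E := by
      have := Real.log_le_log (by positivity) hE1
      rwa [Real.log_mul (ne_of_gt hp) (Real.exp_ne_zero _), Real.log_exp] at this
    have hlog2 : Real.log E ≤ -e / lam := by
      have := Real.log_le_log hEpos hE2
      rwa [Real.log_exp] at this
    constructor
    · have h := mul_le_mul_of_nonneg_left hlog2 (le_of_lt hlam)
      rw [mul_div_cancel₀ _ (ne_of_gt hlam)] at h
      nlinarith
    · have h := mul_le_mul_of_nonneg_left hlog1 (le_of_lt hlam)
      rw [mul_add, mul_div_cancel₀ _ (ne_of_gt hlam)] at h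
      have hc : 0 ≤ lam * (Real.log p + σ) := mul_nonneg (le_of_lt hlam) hcond
      nlinarith
  set S := ((fun lam : ℝ =>
      -lam * Real.log (∑ ω, P ω * Real.exp (-X ω / lam)) - lam * σ) '' Set.Ioi 0) with hS
  have hSne : S.Nonempty := ⟨_, Set.mem_image_of_mem _ (Set.mem_Ioi.mpr one_pos)⟩
  have hub : ∀ x ∈ S, x ≤ e := by
    rintro x ⟨lam, hlam, rfl⟩
    exact (key lam hlam).2
  apply le_antisymm (csSup_le hSne hub)
  apply le_of_forall_sub_le
  intro ε hε
  have hlam : (0:ℝ) < ε / σ := div_pos hε hσ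
  have hmem : (fun lam : ℝ =>
      -lam * Real.log (∑ ω, P ω * Real.exp (-X ω / lam)) - lam * σ) (ε / σ) ∈ S :=
    Set.mem_image_of_mem _ hlam
  have hle := le_csSup ⟨e, hub⟩ hmem
  have hlo := (key (ε / σ) hlam).1
  have : (ε / σ) * σ = ε := div_mul_cancel₀ _ (ne_of_gt hσ)
  simp only at hlo hle
  linarith
end

section
/- Let S, A be finite sets, γ ∈ [0,1), r: S×A → [0,1], and for each (s,a) let U(s,a) be a nonempty set of probability distributions on S, and b: S×A → [0, ∞). Define the operator T on Q: S×A → [0, 1/(1−γ)] by T(Q)(s,a) := max{ r(s,a) + γ·inf_{P ∈ U(s,a)} ∑_{s'} P(s')·max_{a'} Q(s',a') − b(s,a), 0 }. Then T is a γ-contraction in the sup norm: ‖T(Q₁) − T(Q₂)‖_∞ ≤ γ‖Q₁ − Q₂‖_∞ for all Q₁, Q₂ with values in [0, 1/(1−γ)]. -/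
/-- The pessimistic robust Bellman operator: `T(Q)(s,a) =
max{ r(s,a) + γ inf_{P ∈ U(s,a)} ∑_{s'} P(s') max_{a'} Q(s',a') - b(s,a), 0 }`. -/
noncomputable def pessBellman {S A : Type*} [Fintype S] [Fintype A]
    (γ : ℝ) (r : S → A → ℝ) (U : S → A → Set (S → ℝ)) (b : S → A → ℝ)
    (Q : S → A → ℝ) : S → A → ℝ :=
  fun s a =>
    max (r s a + γ * sInf ((fun P : S → ℝ => ∑ s', P s' * ⨆ a', Q s' a') '' U s a) - b s a) 0

/-- The pessimistic robust Bellman operator is a `γ`-contraction in the sup norm on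
functions with values in `[0, 1/(1-γ)]`. -/
theorem pessBellman_contraction {S A : Type*} [Fintype S] [Fintype A]
    [Nonempty S] [Nonempty A]
    (γ : ℝ) (hγ0 : 0 ≤ γ) (hγ1 : γ < 1)
    (r : S → A → ℝ) (hr : ∀ s a, r s a ∈ Set.Icc (0 : ℝ) 1)
    (U : S → A → Set (S → ℝ)) (hUne : ∀ s a, (U s a).Nonempty)
    (hU : ∀ s a, ∀ P ∈ U s a, (∀ s', 0 ≤ P s') ∧ ∑ s', P s' = 1)
    (b : S → A → ℝ) (hb : ∀ s a, 0 ≤ b s a)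
    (Q₁ Q₂ : S → A → ℝ)
    (hQ₁ : ∀ s a, Q₁ s a ∈ Set.Icc 0 (1 / (1 - γ)))
    (hQ₂ : ∀ s a, Q₂ s a ∈ Set.Icc 0 (1 / (1 - γ))) :
    (⨆ p : S × A, |pessBellman γ r U b Q₁ p.1 p.2 - pessBellman γ r U b Q₂ p.1 p.2|) ≤
      γ * ⨆ p : S × A, |Q₁ p.1 p.2 - Q₂ p.1 p.2| := by
  set M : ℝ := ⨆ p : S × A, |Q₁ p.1 p.2 - Q₂ p.1 p.2| with hM
  have hbdd : BddAbove (Set.range fun p : S × A => |Q₁ p.1 p.2 - Q₂ p.1 p.2|) :=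
    (Set.finite_range _).bddAbove
  have hMle : ∀ s a, |Q₁ s a - Q₂ s a| ≤ M := fun s a =>
    le_ciSup hbdd ((s, a) : S × A)
  -- V bounds
  have hVbdd : ∀ (Q : S → A → ℝ) (s : S), BddAbove (Set.range fun a => Q s a) :=
    fun Q s => (Set.finite_range _).bddAbove
  have hV : ∀ s', |(⨆ a', Q₁ s' a') - ⨆ a', Q₂ s' a'| ≤ M := by
    intro s'
    rw [abs_sub_le_iff]
    constructor
    · rw [sub_le_iff_le_add]
      refine ciSup_le fun a => ?_
      calc Q₁ s' a ≤ Q₂ s' a + M := by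
            have := hMle s' a; rw [abs_le] at this; linarith [this.1, this.2]
        _ ≤ M + ⨆ a', Q₂ s' a' := by
            have := le_ciSup (hVbdd Q₂ s') a; linarith
    · rw [sub_le_iff_le_add]
      refine ciSup_le fun a => ?_
      calc Q₂ s' a ≤ Q₁ s' a + M := by
            have := hMle s' a; rw [abs_le] at this; linarith [this.1, this.2]
        _ ≤ M + ⨆ a', Q₁ s' a' := by
            have := le_ciSup (hVbdd Q₁ s') a; linarith
  -- per-point bound on f
  have hf : ∀ s a, ∀ P ∈ U s a,
      |(∑ s', P s' * ⨆ a', Q₁ s' a') - ∑ s', P s' * ⨆ a', Q₂ s' a'| ≤ M := by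
    intro s a P hP
    obtain ⟨hP0, hP1⟩ := hU s a P hP
    rw [← Finset.sum_sub_distrib]
    calc |∑ s', (P s' * (⨆ a', Q₁ s' a') - P s' * ⨆ a', Q₂ s' a')|
        ≤ ∑ s', |P s' * (⨆ a', Q₁ s' a') - P s' * ⨆ a', Q₂ s' a'| :=
          Finset.abs_sum_le_sum_abs _ _
      _ ≤ ∑ s', P s' * M := by
          refine Finset.sum_le_sum fun s' _ => ?_
          rw [← mul_sub, abs_mul, abs_of_nonneg (hP0 s')]
          exact mul_le_mul_of_nonneg_left (hV s') (hP0 s')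
      _ = M := by rw [← Finset.sum_mul, hP1, one_mul]
  -- csInf comparison
  have hInf : ∀ s a,
      |sInf ((fun P : S → ℝ => ∑ s', P s' * ⨆ a', Q₁ s' a') '' U s a) -
       sInf ((fun P : S → ℝ => ∑ s', P s' * ⨆ a', Q₂ s' a') '' U s a)| ≤ M := by
    intro s a
    have hne₁ : ((fun P : S → ℝ => ∑ s', P s' * ⨆ a', Q₁ s' a') '' U s a).Nonempty :=
      (hUne s a).image _
    have hne₂ : ((fun P : S → ℝ => ∑ s', P s' * ⨆ a', Q₂ s' a') '' U s a).Nonempty :=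
      (hUne s a).image _
    have hbd : ∀ (Q : S → A → ℝ), (∀ s a, 0 ≤ Q s a) →
        BddBelow ((fun P : S → ℝ => ∑ s', P s' * ⨆ a', Q s' a') '' U s a) := by
      intro Q hQ
      refine ⟨0, fun x hx => ?_⟩
      obtain ⟨P, hP, rfl⟩ := hx
      obtain ⟨hP0, _⟩ := hU s a P hP
      refine Finset.sum_nonneg fun s' _ => mul_nonneg (hP0 s') ?_
      exact le_trans (hQ s' (Classical.arbitrary A)) (le_ciSup (hVbdd Q s') _)
    have hbd₁ := hbd Q₁ fun s a => (hQ₁ s a).1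
    have hbd₂ := hbd Q₂ fun s a => (hQ₂ s a).1
    rw [abs_sub_le_iff]
    constructor
    · have key : sInf ((fun P : S → ℝ => ∑ s', P s' * ⨆ a', Q₁ s' a') '' U s a) - M ≤
          sInf ((fun P : S → ℝ => ∑ s', P s' * ⨆ a', Q₂ s' a') '' U s a) := by
        refine le_csInf hne₂ fun x hx => ?_
        obtain ⟨P, hP, rfl⟩ := hx
        have h1 := csInf_le hbd₁ (Set.mem_image_of_mem _ hP)
        have h2 := hf s a P hP
        rw [abs_le] at h2
        linarith [h2.1, h2.2]
      linarith
    · have key : sInf ((fun P : S → ℝ => ∑ s', P s' * ⨆ a', Q₂ s' a') '' U s a) - M ≤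
          sInf ((fun P : S → ℝ => ∑ s', P s' * ⨆ a', Q₁ s' a') '' U s a) := by
        refine le_csInf hne₁ fun x hx => ?_
        obtain ⟨P, hP, rfl⟩ := hx
        have h1 := csInf_le hbd₂ (Set.mem_image_of_mem _ hP)
        have h2 := hf s a P hP
        rw [abs_le] at h2
        linarith [h2.1, h2.2]
      linarith
  refine ciSup_le fun p => ?_
  obtain ⟨s, a⟩ := p
  simp only [pessBellman]
  calc |max (r s a + γ * sInf ((fun P : S → ℝ => ∑ s', P s' * ⨆ a', Q₁ s' a') '' U s a) - b s a) 0 -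
        max (r s a + γ * sInf ((fun P : S → ℝ => ∑ s', P s' * ⨆ a', Q₂ s' a') '' U s a) - b s a) 0|
      ≤ |(r s a + γ * sInf ((fun P : S → ℝ => ∑ s', P s' * ⨆ a', Q₁ s' a') '' U s a) - b s a) -
         (r s a + γ * sInf ((fun P : S → ℝ => ∑ s', P s' * ⨆ a', Q₂ s' a') '' U s a) - b s a)| :=
        abs_max_sub_max_le_abs _ _ _
    _ = γ * |sInf ((fun P : S → ℝ => ∑ s', P s' * ⨆ a', Q₁ s' a') '' U s a) -
          sInf ((fun P : S → ℝ => ∑ s', P s' * ⨆ a', Q₂ s' a') '' U s a)| := by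
        rw [show (r s a + γ * sInf ((fun P : S → ℝ => ∑ s', P s' * ⨆ a', Q₁ s' a') '' U s a) - b s a) -
            (r s a + γ * sInf ((fun P : S → ℝ => ∑ s', P s' * ⨆ a', Q₂ s' a') '' U s a) - b s a) =
            γ * (sInf ((fun P : S → ℝ => ∑ s', P s' * ⨆ a', Q₁ s' a') '' U s a) -
            sInf ((fun P : S → ℝ => ∑ s', P s' * ⨆ a', Q₂ s' a') '' U s a)) from by ring,
          abs_mul, abs_of_nonneg hγ0]
    _ ≤ γ * M := mul_le_mul_of_nonneg_left (hInf s a) hγ0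
end
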